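/- Let α ∈ (1/2,1) and T > 0. There exists a constant C > 0 (depending only on α and T) such that for all t ∈ [0,T] and all 0 < h ≤ 1, h ∫_0^t K(h−χ_h(u)) · min((t−u)^(−α), h^(−α)) du ≤ C h^α. -/

import Mathlib

open MeasureTheory intervalIntegral Real

/-- Fractional kernel `K(u) = u^(α-1)/Γ(α)` for `u > 0`, `0` otherwise. -/
noncomputable def Kker (α u : ℝ) : ℝ := if 0 < u then u ^ (α - 1) / Real.Gamma α else 0

/-- First-order resolvent kernel `L(u) = u^(-α)/Γ(1-α)` for `u > 0`, `0` otherwise. -/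
noncomputable def Lker (α u : ℝ) : ℝ := if 0 < u then u ^ (-α) / Real.Gamma (1 - α) else 0

/-- Discretization map `φ_h(t) = h⌊t/h⌋`. -/
noncomputable def phi (h t : ℝ) : ℝ := h * (⌊t / h⌋ : ℝ)

/-- `χ_h(u) = u - φ_h(u)`. -/
noncomputable def chi (h u : ℝ) : ℝ := u - phi h u

/-- Discretized kernel `K^{(h)}`. -/
noncomputable def Kh (α h t s : ℝ) : ℝ :=
  if 0 ≤ s ∧ s < phi h t then Kker α (phi h t - s) else 0

/-- The kernel `g^{(h)}(t,s) = ∫_s^t L(t-v) K^{(h)}(v,s) dv`. -/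
noncomputable def gh (α h t s : ℝ) : ℝ := ∫ v in s..t, Lker α (t - v) * Kh α h v s

lemma factA {α : ℝ} (hα1 : 0 ≤ α) (hα2 : α < 1) {a b : ℝ} (ha : 0 ≤ a) (hab : a ≤ b) :
    (1 - α) * b ^ (-α) * (b - a) ≤ b ^ (1 - α) - a ^ (1 - α) := by
  rcases eq_or_lt_of_le hab with rfl | hlt
  · simp
  have hb : 0 < b := lt_of_le_of_lt ha hlt
  have hne : (1:ℝ) - α ≠ 0 := by linarith
  have hint : IntervalIntegrable (fun x : ℝ => x ^ (-α)) volume a b :=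
    intervalIntegral.intervalIntegrable_rpow' (by linarith)
  have heq : b ^ (1 - α) - a ^ (1 - α) = (1 - α) * ∫ x in a..b, x ^ (-α) := by
    rw [integral_rpow (Or.inl (by linarith : (-1:ℝ) < -α))]
    have h1 : -α + 1 = 1 - α := by ring
    rw [h1, mul_div_cancel₀ _ hne]
  rw [heq]
  have hmono : b ^ (-α) * (b - a) ≤ ∫ x in a..b, x ^ (-α) := by
    have hconst : ∫ x in Set.Ioc a b, (fun _ : ℝ => b ^ (-α)) x =
        b ^ (-α) * (b - a) := by
      rw [setIntegral_const, Real.volume_real_Ioc_of_le hab]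
      rw [smul_eq_mul, mul_comm]
    rw [intervalIntegral.integral_of_le hab, ← hconst]
    refine setIntegral_mono_on ?_ ?_ measurableSet_Ioc ?_
    · exact integrableOn_const (by rw [Real.volume_Ioc]; exact ENNReal.ofReal_ne_top)
    · exact hint.1
    · intro x hx
      exact Real.rpow_le_rpow_of_nonpos (lt_of_le_of_lt ha hx.1) hx.2 (by linarith)
  calc (1 - α) * b ^ (-α) * (b - a) = (1 - α) * (b ^ (-α) * (b - a)) := by ring
    _ ≤ (1 - α) * ∫ x in a..b, x ^ (-α) :=
        mul_le_mul_of_nonneg_left hmono (by linarith)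

lemma aux_sum2 {α : ℝ} (hα1 : 0 ≤ α) (hα2 : α < 1) (m : ℕ) :
    ∑ j ∈ Finset.range (m + 2), (max ((j:ℝ) - 1) 1) ^ (-α)
      ≤ 2 + (m:ℝ) ^ (1 - α) / (1 - α) := by
  have h1α : (0:ℝ) < 1 - α := by linarith
  induction m with
  | zero =>
    rw [Finset.sum_range_succ, Finset.sum_range_one]
    push_cast
    rw [Real.zero_rpow (by linarith : (1:ℝ) - α ≠ 0)]
    norm_num [Real.one_rpow]
  | succ m ih =>
    rw [show m + 1 + 2 = (m + 2) + 1 from rfl, Finset.sum_range_succ]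
    have h1 : (max ((↑(m + 2):ℝ) - 1) 1) = (m:ℝ) + 1 := by
      push_cast
      rw [max_eq_left (by linarith [Nat.cast_nonneg (α := ℝ) m])]
      ring
    have hterm : (max ((↑(m + 2):ℝ) - 1) 1) ^ (-α)
        ≤ (((m:ℝ) + 1) ^ (1 - α) - (m:ℝ) ^ (1 - α)) / (1 - α) := by
      rw [h1, le_div_iff₀ h1α]
      have hA := factA hα1 hα2 (Nat.cast_nonneg (α := ℝ) m)
        (by linarith [Nat.cast_nonneg (α := ℝ) m] : (m:ℝ) ≤ (m:ℝ) + 1)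
      calc ((m:ℝ) + 1) ^ (-α) * (1 - α)
          = (1 - α) * ((m:ℝ) + 1) ^ (-α) * (((m:ℝ) + 1) - m) := by ring
        _ ≤ ((m:ℝ) + 1) ^ (1 - α) - (m:ℝ) ^ (1 - α) := hA
    have hfinal : (2 + (m:ℝ) ^ (1 - α) / (1 - α))
        + (((m:ℝ) + 1) ^ (1 - α) - (m:ℝ) ^ (1 - α)) / (1 - α)
        = 2 + ((m:ℝ) + 1) ^ (1 - α) / (1 - α) := by ring
    push_cast
    push_cast at ih hterm
    linarith

lemma aux_sum {α : ℝ} (hα1 : 0 ≤ α) (hα2 : α < 1) (n : ℕ) :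
    ∑ j ∈ Finset.range n, (max ((j:ℝ) - 1) 1) ^ (-α)
      ≤ 2 + (n:ℝ) ^ (1 - α) / (1 - α) := by
  have h1α : (0:ℝ) < 1 - α := by linarith
  match n with
  | 0 =>
    simp only [Finset.range_zero, Finset.sum_empty]
    positivity
  | 1 =>
    simp only [Finset.sum_range_one, Nat.cast_zero, Nat.cast_one, zero_sub, Real.one_rpow]
    rw [show max (-1:ℝ) 1 = 1 by norm_num, Real.one_rpow]
    have hd : (0:ℝ) ≤ 1 / (1 - α) := div_nonneg zero_le_one h1α.le
    linarith
  | (m + 2) =>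
    refine le_trans (aux_sum2 hα1 hα2 m) ?_
    have : (m:ℝ) ^ (1 - α) ≤ ((↑(m+2):ℝ)) ^ (1 - α) := by
      apply Real.rpow_le_rpow (Nat.cast_nonneg _) (by push_cast; linarith) (le_of_lt h1α)
    have h2 : (m:ℝ) ^ (1 - α) / (1 - α) ≤ ((↑(m+2):ℝ)) ^ (1 - α) / (1 - α) :=
      div_le_div_of_nonneg_right this h1α.le
    linarith

lemma chi_eq {h : ℝ} (hh : 0 < h) (k : ℕ) {u : ℝ} (h1 : (k:ℝ) * h < u)
    (h2 : u < ((k:ℝ) + 1) * h) : chi h u = u - (k:ℝ) * h := by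
  have hfl : ⌊u / h⌋ = (k : ℤ) := by
    rw [Int.floor_eq_iff]
    constructor
    · push_cast
      rw [le_div_iff₀ hh]
      linarith
    · push_cast
      rw [div_lt_iff₀ hh]
      linarith
  unfold chi phi
  rw [hfl]
  push_cast
  ring

lemma Kker_nonneg {α : ℝ} (hα : 0 < α) (u : ℝ) : 0 ≤ Kker α u := by
  unfold Kker
  split
  · exact div_nonneg (Real.rpow_nonneg (le_of_lt ‹0 < u›) _)
      (le_of_lt (Real.Gamma_pos_of_pos hα))
  · exact le_refl 0

lemma Kint_integrable {α : ℝ} (hα1 : 0 < α) (hα2 : α < 1) {h : ℝ} (hh : 0 < h) (a b : ℝ)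
    (hab : b - a = h) :
    IntegrableOn (fun u => Kker α (b - u)) (Set.Ioc a b) volume := by
  have hab' : a ≤ b := by linarith
  have hint : IntervalIntegrable (fun x : ℝ => x ^ (α - 1) / Real.Gamma α) volume 0 h :=
    (intervalIntegral.intervalIntegrable_rpow' (by linarith)).div_const _
  have hcomp := hint.comp_sub_left b
  rw [sub_zero] at hcomp
  have hcomp' : IntervalIntegrable (fun x => (b - x) ^ (α - 1) / Real.Gamma α) volume a b := by
    have : b - h = a := by linarith
    rw [this] at hcomp
    exact hcomp.symm
  refine (hcomp'.1).congr_fun ?_ measurableSet_Ioc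
  intro u hu
  rcases lt_or_eq_of_le hu.2 with hlt | rfl
  · simp only [Kker, if_pos (show 0 < b - u by linarith)]
  · simp only [Kker, sub_self, lt_self_iff_false, if_false,
      Real.zero_rpow (show α - 1 ≠ 0 by linarith), zero_div]

lemma Kint {α : ℝ} (hα1 : 0 < α) (hα2 : α < 1) {h : ℝ} (hh : 0 < h) (a b : ℝ) (hab : b - a = h) :
    ∫ u in Set.Ioc a b, Kker α (b - u) = h ^ α / (α * Real.Gamma α) := by
  have hab' : a ≤ b := by linarith
  have hcong : ∫ u in Set.Ioc a b, Kker α (b - u)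
      = ∫ u in Set.Ioc a b, (b - u) ^ (α - 1) / Real.Gamma α := by
    refine setIntegral_congr_fun measurableSet_Ioc ?_
    intro u hu
    rcases lt_or_eq_of_le hu.2 with hlt | rfl
    · simp only [Kker, if_pos (show 0 < b - u by linarith)]
    · simp only [Kker, sub_self, lt_self_iff_false, if_false,
        Real.zero_rpow (show α - 1 ≠ 0 by linarith), zero_div]
  rw [hcong, ← intervalIntegral.integral_of_le hab']
  have h2 : (∫ u in a..b, (b - u) ^ (α - 1) / Real.Gamma α)
      = (∫ u in a..b, (b - u) ^ (α - 1)) / Real.Gamma α := by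
    rw [intervalIntegral.integral_div]
  rw [h2, intervalIntegral.integral_comp_sub_left (fun x => x ^ (α - 1)) b, sub_self]
  have h3 : b - a = h := hab
  rw [h3, integral_rpow (Or.inl (by linarith : (-1:ℝ) < α - 1))]
  rw [Real.zero_rpow (by linarith : α - 1 + 1 ≠ 0)]
  have h4 : α - 1 + 1 = α := by ring
  rw [h4, sub_zero, div_div]

/-- `h ∫_0^t K(h−χ_h(u)) min((t−u)^(−α), h^(−α)) du ≤ C h^α`. -/
theorem kernel_chi_integral_L1_bound (α T : ℝ) (hα : α ∈ Set.Ioo (1/2 : ℝ) 1) (hT : 0 < T) :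
    ∃ C > 0, ∀ t h : ℝ, 0 ≤ t → t ≤ T → 0 < h → h ≤ 1 →
      h * (∫ u in (0:ℝ)..t, Kker α (h - chi h u) * min ((t - u) ^ (-α)) (h ^ (-α)))
        ≤ C * h ^ α := by
  obtain ⟨hα1, hα2⟩ := hα
  have hα0 : (0:ℝ) < α := lt_trans (by norm_num) hα1
  have hΓ : 0 < Real.Gamma α := Real.Gamma_pos_of_pos hα0
  have h1α : (0:ℝ) < 1 - α := by linarith
  refine ⟨(2 + (T + 1) / (1 - α)) / (α * Real.Gamma α), by positivity, ?_⟩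
  intro t h ht0 htT hh0 hh1
  set C : ℝ := (2 + (T + 1) / (1 - α)) / (α * Real.Gamma α) with hCdef
  have hCpos : 0 < C := by positivity
  have hhα : (0:ℝ) < h ^ α := Real.rpow_pos_of_pos hh0 α
  set f : ℝ → ℝ := fun u => Kker α (h - chi h u) * min ((t - u) ^ (-α)) (h ^ (-α)) with hfdef
  rcases eq_or_lt_of_le ht0 with rfl | htpos
  · rw [intervalIntegral.integral_same, mul_zero]
    positivity
  by_cases hfi : IntegrableOn f (Set.Ioc 0 t) volume
  case neg =>
    have hni : ¬ IntervalIntegrable f volume 0 t := by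
      rw [intervalIntegrable_iff_integrableOn_Ioc_of_le ht0]
      exact hfi
    rw [intervalIntegral.integral_undef hni, mul_zero]
    positivity
  case pos =>
  set n : ℕ := ⌈t / h⌉₊ with hndef
  have hn1 : 1 ≤ n := Nat.one_le_ceil_iff.2 (div_pos htpos hh0)
  have hnht : t ≤ (n:ℝ) * h := by
    rw [← div_le_iff₀ hh0]
    exact Nat.le_ceil _
  have hnlt : ((n:ℝ) - 1) * h < t := by
    rw [← lt_div_iff₀ hh0]
    have := Nat.ceil_lt_add_one (le_of_lt (div_pos htpos hh0))
    have h2 : (n:ℝ) < t / h + 1 := by exact_mod_cast this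
    linarith
  set s : ℕ → Set ℝ := fun k => Set.Ioc 0 t ∩ Set.Ioc ((k:ℝ) * h) (((k:ℝ) + 1) * h) with hsdef
  have hsmeas : ∀ k, MeasurableSet (s k) := fun k => measurableSet_Ioc.inter measurableSet_Ioc
  set B : ℕ → ℝ := fun k => (max (t - ((k:ℝ) + 1) * h) h) ^ (-α) with hBdef
  have hBpos : ∀ k : ℕ, (0:ℝ) < max (t - ((k:ℝ) + 1) * h) h :=
    fun k => lt_of_lt_of_le hh0 (le_max_right _ _)
  have hBnn : ∀ k, 0 ≤ B k := fun k => Real.rpow_nonneg (le_of_lt (hBpos k)) _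
  have hfnn : ∀ u ∈ Set.Ioc (0:ℝ) t, 0 ≤ f u := by
    intro u hu
    apply mul_nonneg (Kker_nonneg hα0 _)
    exact le_min (Real.rpow_nonneg (by linarith [hu.2]) _) (Real.rpow_nonneg hh0.le _)
  -- per-interval bound
  have hstep : ∀ k : ℕ, ∫⁻ u in s k, ENNReal.ofReal (f u)
      ≤ ENNReal.ofReal (B k * (h ^ α / (α * Real.Gamma α))) := by
    intro k
    have hba : ((k:ℝ) + 1) * h - (k:ℝ) * h = h := by ring
    have hab : (k:ℝ) * h ≤ ((k:ℝ) + 1) * h := by nlinarith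
    have hnull : ∀ᵐ u : ℝ ∂volume, u ≠ ((k:ℝ) + 1) * h := by
      rw [MeasureTheory.ae_iff]
      have : {u : ℝ | ¬ u ≠ ((k:ℝ) + 1) * h} = {((k:ℝ) + 1) * h} := by
        ext x; simp
      rw [this]
      exact measure_singleton _
    have hae : ∀ᵐ u ∂(volume.restrict (s k)),
        ENNReal.ofReal (f u) ≤ ENNReal.ofReal (Kker α (((k:ℝ) + 1) * h - u) * B k) := by
      rw [ae_restrict_iff' (hsmeas k)]
      filter_upwards [hnull] with u hub hu
      apply ENNReal.ofReal_le_ofReal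
      have hu1 : u ∈ Set.Ioc (0:ℝ) t := hu.1
      have hu2 : u ∈ Set.Ioc ((k:ℝ) * h) (((k:ℝ) + 1) * h) := hu.2
      have hub' : u < ((k:ℝ) + 1) * h := lt_of_le_of_ne hu2.2 hub
      have hchi : chi h u = u - (k:ℝ) * h := chi_eq hh0 k hu2.1 hub'
      have harg : h - chi h u = ((k:ℝ) + 1) * h - u := by rw [hchi]; ring
      have hminB : min ((t - u) ^ (-α)) (h ^ (-α)) ≤ B k := by
        rcases lt_or_eq_of_le hu1.2 with hut | hut
        · have hmax : min ((t - u) ^ (-α)) (h ^ (-α)) ≤ (max (t - u) h) ^ (-α) := by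
            rcases le_total (t - u) h with hc | hc
            · rw [max_eq_right hc]; exact min_le_right _ _
            · rw [max_eq_left hc]; exact min_le_left _ _
          refine le_trans hmax ?_
          apply Real.rpow_le_rpow_of_nonpos (hBpos k) ?_ (by linarith : -α ≤ 0)
          exact max_le_max (by linarith [hu2.2]) (le_refl h)
        · have h0 : t - u = 0 := by rw [hut]; ring
          rw [h0, Real.zero_rpow (by linarith : -α ≠ 0)]
          exact le_trans (min_le_left _ _) (hBnn k)
      calc f u = Kker α (((k:ℝ) + 1) * h - u) * min ((t - u) ^ (-α)) (h ^ (-α)) := by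
            rw [hfdef]; simp only []; rw [harg]
        _ ≤ Kker α (((k:ℝ) + 1) * h - u) * B k :=
            mul_le_mul_of_nonneg_left hminB (Kker_nonneg hα0 _)
    calc ∫⁻ u in s k, ENNReal.ofReal (f u)
        ≤ ∫⁻ u in s k, ENNReal.ofReal (Kker α (((k:ℝ) + 1) * h - u) * B k) :=
          lintegral_mono_ae hae
      _ ≤ ∫⁻ u in Set.Ioc ((k:ℝ) * h) (((k:ℝ) + 1) * h),
            ENNReal.ofReal (Kker α (((k:ℝ) + 1) * h - u) * B k) :=
          lintegral_mono_set Set.inter_subset_right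
      _ = ENNReal.ofReal (∫ u in Set.Ioc ((k:ℝ) * h) (((k:ℝ) + 1) * h),
            Kker α (((k:ℝ) + 1) * h - u) * B k) := by
          rw [← ofReal_integral_eq_lintegral_ofReal]
          · exact (Kint_integrable hα0 hα2 hh0 _ _ hba).mul_const _
          · exact (ae_restrict_iff' measurableSet_Ioc).mpr
              (ae_of_all _ fun u _ => mul_nonneg (Kker_nonneg hα0 _) (hBnn k))
      _ = ENNReal.ofReal (B k * (h ^ α / (α * Real.Gamma α))) := by
          rw [MeasureTheory.integral_mul_const, Kint hα0 hα2 hh0 _ _ hba, mul_comm]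
  -- covering
  have hsub : Set.Ioc (0:ℝ) t ⊆ ⋃ k : ℕ, s k := by
    intro u hu
    have hu0 : 0 < u := hu.1
    have hm1 : 1 ≤ ⌈u / h⌉₊ := Nat.one_le_ceil_iff.2 (div_pos hu0 hh0)
    refine Set.mem_iUnion.2 ⟨⌈u / h⌉₊ - 1, hu, ?_⟩
    constructor
    · have hlt : ((⌈u / h⌉₊ - 1 : ℕ):ℝ) < u / h := by
        rw [← Nat.lt_ceil]
        exact Nat.sub_lt hm1 one_pos
      rw [← lt_div_iff₀ hh0]
      exact hlt
    · have hcast : ((⌈u / h⌉₊ - 1 : ℕ):ℝ) + 1 = (⌈u / h⌉₊ : ℝ) := by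
        rw [Nat.cast_sub hm1]
        push_cast
        ring
      rw [hcast, ← div_le_iff₀ hh0]
      exact Nat.le_ceil _
  have hkey : ENNReal.ofReal (∫ u in Set.Ioc (0:ℝ) t, f u)
      ≤ ENNReal.ofReal (∑ k ∈ Finset.range n, B k * (h ^ α / (α * Real.Gamma α))) := by
    rw [ofReal_integral_eq_lintegral_ofReal hfi
      ((ae_restrict_iff' measurableSet_Ioc).mpr (ae_of_all _ hfnn))]
    calc ∫⁻ u in Set.Ioc (0:ℝ) t, ENNReal.ofReal (f u)
        ≤ ∫⁻ u in ⋃ k : ℕ, s k, ENNReal.ofReal (f u) := lintegral_mono_set hsub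
      _ ≤ ∑' k : ℕ, ∫⁻ u in s k, ENNReal.ofReal (f u) := lintegral_iUnion_le _ _
      _ = ∑ k ∈ Finset.range n, ∫⁻ u in s k, ENNReal.ofReal (f u) := by
          apply tsum_eq_sum
          intro k hk
          have hkn : (n:ℝ) ≤ (k:ℝ) := by
            exact_mod_cast Nat.le_of_not_lt (fun hcon => hk (Finset.mem_range.2 hcon))
          have hempty : s k = ∅ := by
            rw [Set.eq_empty_iff_forall_notMem]
            intro u hu
            have h1 : u ≤ t := hu.1.2
            have h2 : (k:ℝ) * h < u := hu.2.1
            nlinarith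
          rw [hempty]
          simp
      _ ≤ ∑ k ∈ Finset.range n, ENNReal.ofReal (B k * (h ^ α / (α * Real.Gamma α))) :=
          Finset.sum_le_sum fun k _ => hstep k
      _ = ENNReal.ofReal (∑ k ∈ Finset.range n, B k * (h ^ α / (α * Real.Gamma α))) :=
          (ENNReal.ofReal_sum_of_nonneg fun k _ =>
            mul_nonneg (hBnn k) (by positivity)).symm
  have hEle : (∫ u in Set.Ioc (0:ℝ) t, f u)
      ≤ ∑ k ∈ Finset.range n, B k * (h ^ α / (α * Real.Gamma α)) := by
    refine (ENNReal.ofReal_le_ofReal_iff ?_).1 hkey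
    exact Finset.sum_nonneg fun k _ => mul_nonneg (hBnn k) (by positivity)
  -- sum bound
  have hBk : ∀ k ∈ Finset.range n, B k ≤ h ^ (-α) * (max ((n:ℝ) - (k:ℝ) - 2) 1) ^ (-α) := by
    intro k hk
    have hkn : (k:ℝ) + 1 ≤ (n:ℝ) := by
      have := Finset.mem_range.1 hk
      exact_mod_cast Nat.succ_le_of_lt this
    have hmpos : (0:ℝ) < max ((n:ℝ) - (k:ℝ) - 2) 1 := lt_of_lt_of_le one_pos (le_max_right _ _)
    have hmaxineq : h * max ((n:ℝ) - (k:ℝ) - 2) 1 ≤ max (t - ((k:ℝ) + 1) * h) h := by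
      rw [mul_max_of_nonneg _ _ hh0.le, mul_one]
      apply max_le_max _ (le_refl h)
      nlinarith
    have hle : B k ≤ (h * max ((n:ℝ) - (k:ℝ) - 2) 1) ^ (-α) :=
      Real.rpow_le_rpow_of_nonpos (mul_pos hh0 hmpos) hmaxineq (by linarith)
    rwa [Real.mul_rpow hh0.le hmpos.le] at hle
  have hrefl : ∑ k ∈ Finset.range n, (max ((n:ℝ) - (k:ℝ) - 2) 1) ^ (-α)
      = ∑ j ∈ Finset.range n, (max ((j:ℝ) - 1) 1) ^ (-α) := by
    rw [← Finset.sum_range_reflect (fun j => (max ((j:ℝ) - 1) 1) ^ (-α)) n]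
    apply Finset.sum_congr rfl
    intro k hk
    have hk' : k + 1 ≤ n := Nat.succ_le_of_lt (Finset.mem_range.1 hk)
    have hc : ((n - 1 - k : ℕ):ℝ) = (n:ℝ) - 1 - (k:ℝ) := by
      have h1 : k ≤ n - 1 := Nat.le_sub_one_of_lt (Finset.mem_range.1 hk)
      rw [Nat.cast_sub h1, Nat.cast_sub hn1]
      push_cast
      ring
    rw [hc]
    ring_nf
  have hsumf : ∑ j ∈ Finset.range n, (max ((j:ℝ) - 1) 1) ^ (-α)
      ≤ 2 + (n:ℝ) ^ (1 - α) / (1 - α) := aux_sum hα0.le hα2 n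
  have hnT : (n:ℝ) ≤ (T + 1) / h := by
    have h1 : (n:ℝ) < t / h + 1 := by
      exact_mod_cast Nat.ceil_lt_add_one (le_of_lt (div_pos htpos hh0))
    have h2 : t / h + 1 ≤ (T + 1) / h := by
      rw [div_add' _ _ _ (ne_of_gt hh0)]
      apply div_le_div_of_nonneg_right _ hh0.le
      linarith
    linarith
  have hnrp : (n:ℝ) ^ (1 - α) ≤ (T + 1) ^ (1 - α) * h ^ (α - 1) := by
    have h1 : (n:ℝ) ^ (1 - α) ≤ ((T + 1) / h) ^ (1 - α) :=
      Real.rpow_le_rpow (Nat.cast_nonneg n) hnT h1α.le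
    rw [Real.div_rpow (by linarith : (0:ℝ) ≤ T + 1) hh0.le] at h1
    rw [div_eq_mul_inv, ← Real.rpow_neg hh0.le, neg_sub] at h1
    exact h1
  -- put everything together
  have hp1 : h * h ^ (-α) = h ^ (1 - α) := by
    nth_rewrite 1 [← Real.rpow_one h]
    rw [← Real.rpow_add hh0]
    ring_nf
  have hp2 : h ^ (1 - α) * h ^ (α - 1) = 1 := by
    rw [← Real.rpow_add hh0]
    norm_num
  have hh1a : h ^ (1 - α) ≤ 1 := Real.rpow_le_one hh0.le hh1 h1α.le
  have hT1 : (T + 1) ^ (1 - α) ≤ T + 1 := by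
    nth_rewrite 2 [← Real.rpow_one (T + 1)]
    exact Real.rpow_le_rpow_of_exponent_le (by linarith) (by linarith)
  have hsumB : h * ∑ k ∈ Finset.range n, B k ≤ 2 + (T + 1) / (1 - α) := by
    have h1 : ∑ k ∈ Finset.range n, B k
        ≤ h ^ (-α) * (2 + (n:ℝ) ^ (1 - α) / (1 - α)) := by
      calc ∑ k ∈ Finset.range n, B k
          ≤ ∑ k ∈ Finset.range n, h ^ (-α) * (max ((n:ℝ) - (k:ℝ) - 2) 1) ^ (-α) :=
            Finset.sum_le_sum hBk
        _ = h ^ (-α) * ∑ k ∈ Finset.range n, (max ((n:ℝ) - (k:ℝ) - 2) 1) ^ (-α) := by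
            rw [Finset.mul_sum]
        _ = h ^ (-α) * ∑ j ∈ Finset.range n, (max ((j:ℝ) - 1) 1) ^ (-α) := by rw [hrefl]
        _ ≤ h ^ (-α) * (2 + (n:ℝ) ^ (1 - α) / (1 - α)) :=
            mul_le_mul_of_nonneg_left hsumf (Real.rpow_nonneg hh0.le _)
    have h2 : h * ∑ k ∈ Finset.range n, B k
        ≤ h ^ (1 - α) * (2 + (n:ℝ) ^ (1 - α) / (1 - α)) := by
      calc h * ∑ k ∈ Finset.range n, B k
          ≤ h * (h ^ (-α) * (2 + (n:ℝ) ^ (1 - α) / (1 - α))) :=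
            mul_le_mul_of_nonneg_left h1 hh0.le
        _ = h ^ (1 - α) * (2 + (n:ℝ) ^ (1 - α) / (1 - α)) := by rw [← hp1]; ring
    have h3 : h ^ (1 - α) * (2 + (n:ℝ) ^ (1 - α) / (1 - α))
        ≤ h ^ (1 - α) * (2 + ((T + 1) ^ (1 - α) * h ^ (α - 1)) / (1 - α)) := by
      apply mul_le_mul_of_nonneg_left _ (Real.rpow_nonneg hh0.le _)
      have := div_le_div_of_nonneg_right hnrp h1α.le
      linarith
    have h4 : h ^ (1 - α) * (2 + ((T + 1) ^ (1 - α) * h ^ (α - 1)) / (1 - α))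
        = 2 * h ^ (1 - α) + (T + 1) ^ (1 - α) * (h ^ (1 - α) * h ^ (α - 1)) / (1 - α) := by
      ring
    have h5 : 2 * h ^ (1 - α) + (T + 1) ^ (1 - α) * (h ^ (1 - α) * h ^ (α - 1)) / (1 - α)
        = 2 * h ^ (1 - α) + (T + 1) ^ (1 - α) / (1 - α) := by
      rw [hp2, mul_one]
    have h6 : (T + 1) ^ (1 - α) / (1 - α) ≤ (T + 1) / (1 - α) :=
      div_le_div_of_nonneg_right hT1 h1α.le
    calc h * ∑ k ∈ Finset.range n, B k
        ≤ h ^ (1 - α) * (2 + (n:ℝ) ^ (1 - α) / (1 - α)) := h2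
      _ ≤ h ^ (1 - α) * (2 + ((T + 1) ^ (1 - α) * h ^ (α - 1)) / (1 - α)) := h3
      _ = 2 * h ^ (1 - α) + (T + 1) ^ (1 - α) / (1 - α) := by rw [h4, h5]
      _ ≤ 2 + (T + 1) / (1 - α) := by linarith
  -- final
  rw [intervalIntegral.integral_of_le ht0]
  calc h * ∫ u in Set.Ioc (0:ℝ) t, f u
      ≤ h * ∑ k ∈ Finset.range n, B k * (h ^ α / (α * Real.Gamma α)) :=
        mul_le_mul_of_nonneg_left hEle hh0.le
    _ = (h * ∑ k ∈ Finset.range n, B k) * (h ^ α / (α * Real.Gamma α)) := by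
        rw [← Finset.sum_mul]
        ring
    _ ≤ (2 + (T + 1) / (1 - α)) * (h ^ α / (α * Real.Gamma α)) := by
        apply mul_le_mul_of_nonneg_right hsumB
        positivity
    _ = C * h ^ α := by
        rw [hCdef]
        field_simp
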